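/- Fix d ≥ 2, p = (p₁,…,p_d) ∈ (0,1)^d, and let f be a probability mass function on {0,1}^d whose margins satisfy Σ_{i : i_m = 1} f(i) = p_m for each m. For each nonempty subset S ⊆ {1,…,d} define ν_S = Σ_{i∈{0,1}^d} f(i)·Π_{m∈S} (i_m - p_m)/p_m. Then for all u ∈ [0,1]^d, Σ_{i∈{0,1}^d} f(i)·Π_{m=1}^{d} ( u_m^{1/(1-p_m)} - i_m( u_m^{1/(1-p_m)} - u_m )/p_m ) = ( Π_{m=1}^d u_m )·( 1 + Σ_{∅≠S⊆{1,…,d}} ν_S · Π_{m∈S} ( 1 - u_m^{p_m/(1-p_m)} ) ). -/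

import Mathlib

open MeasureTheory ProbabilityTheory Set

/-- The real value (`0` or `1`) of a Bernoulli outcome. -/
noncomputable def bval (b : Bool) : ℝ := if b then 1 else 0

lemma gfgm_key (p u : ℝ) (hp : p ∈ Ioo (0:ℝ) 1) (hu : u ∈ Icc (0:ℝ) 1) (b : Bool) :
    u ^ (1 - p)⁻¹ - bval b * ((u ^ (1 - p)⁻¹ - u) / p)
      = u * (1 + (bval b - p) / p * (1 - u ^ (p / (1 - p)))) := by
  have h1p : (0:ℝ) < 1 - p := by linarith [hp.2]
  have hp0 : p ≠ 0 := ne_of_gt hp.1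
  have hq : 0 < p / (1 - p) := div_pos hp.1 h1p
  have hsum : (1 - p)⁻¹ = 1 + p / (1 - p) := by field_simp; ring
  have hrw : u ^ (1 - p)⁻¹ = u * u ^ (p / (1 - p)) := by
    rw [hsum, Real.rpow_add' hu.1 (by positivity), Real.rpow_one]
  rw [hrw]
  cases b <;> simp only [bval, if_true, if_false] <;> field_simp <;> ring

theorem gfgm_natural_representation
    (d : ℕ) (hd : 2 ≤ d) (p : Fin d → ℝ) (hp : ∀ m, p m ∈ Ioo (0 : ℝ) 1)
    (f : (Fin d → Bool) → ℝ) (hf0 : ∀ i, 0 ≤ f i) (hf1 : ∑ i : Fin d → Bool, f i = 1)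
    (hmarg : ∀ m, ∑ i ∈ Finset.univ.filter (fun i : Fin d → Bool => i m = true), f i = p m)
    (u : Fin d → ℝ) (hu : ∀ m, u m ∈ Icc (0 : ℝ) 1) :
    ∑ i : Fin d → Bool,
        f i * ∏ m, (u m ^ (1 - p m)⁻¹ - bval (i m) * ((u m ^ (1 - p m)⁻¹ - u m) / p m))
      = (∏ m, u m) *
          (1 + ∑ S ∈ Finset.univ.powerset.filter Finset.Nonempty,
            (∑ i : Fin d → Bool, f i * ∏ m ∈ S, (bval (i m) - p m) / p m) *
              ∏ m ∈ S, (1 - u m ^ (p m / (1 - p m)))) := by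
  set T : Fin d → ℝ := fun m => 1 - u m ^ (p m / (1 - p m)) with hT
  have step1 : ∀ i : Fin d → Bool,
      (∏ m, (u m ^ (1 - p m)⁻¹ - bval (i m) * ((u m ^ (1 - p m)⁻¹ - u m) / p m)))
        = (∏ m, u m) * ∑ S ∈ (Finset.univ : Finset (Fin d)).powerset,
            ∏ m ∈ S, ((bval (i m) - p m) / p m * T m) := by
    intro i
    have h : ∀ m, (u m ^ (1 - p m)⁻¹ - bval (i m) * ((u m ^ (1 - p m)⁻¹ - u m) / p m))
        = u m * ((bval (i m) - p m) / p m * T m + 1) := by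
      intro m
      rw [gfgm_key (p m) (u m) (hp m) (hu m) (i m)]
      ring
    rw [Finset.prod_congr rfl fun m _ => h m, Finset.prod_mul_distrib, Finset.prod_add]
    simp
  calc ∑ i : Fin d → Bool,
        f i * ∏ m, (u m ^ (1 - p m)⁻¹ - bval (i m) * ((u m ^ (1 - p m)⁻¹ - u m) / p m))
      = ∑ S ∈ (Finset.univ : Finset (Fin d)).powerset, ∑ i : Fin d → Bool,
          (∏ m, u m) * (f i * ((∏ m ∈ S, (bval (i m) - p m) / p m) * ∏ m ∈ S, T m)) := by
        have hmid : ∑ i : Fin d → Bool,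
            f i * ∏ m, (u m ^ (1 - p m)⁻¹ - bval (i m) * ((u m ^ (1 - p m)⁻¹ - u m) / p m))
            = ∑ i : Fin d → Bool, ∑ S ∈ (Finset.univ : Finset (Fin d)).powerset,
              (∏ m, u m) * (f i * ((∏ m ∈ S, (bval (i m) - p m) / p m) * ∏ m ∈ S, T m)) := by
          refine Finset.sum_congr rfl fun i _ => ?_
          rw [step1 i]; simp only [Finset.mul_sum]
          refine Finset.sum_congr rfl fun S _ => ?_
          rw [Finset.prod_mul_distrib]; ring
        rw [hmid]
        exact Finset.sum_comm
    _ = (∏ m, u m) * ∑ S ∈ (Finset.univ : Finset (Fin d)).powerset,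
          (∑ i : Fin d → Bool, f i * ∏ m ∈ S, (bval (i m) - p m) / p m) * ∏ m ∈ S, T m := by
        rw [Finset.mul_sum]
        refine Finset.sum_congr rfl fun S _ => ?_
        rw [Finset.sum_mul, Finset.mul_sum]
        refine Finset.sum_congr rfl fun i _ => ?_
        ring
    _ = (∏ m, u m) *
          (1 + ∑ S ∈ Finset.univ.powerset.filter Finset.Nonempty,
            (∑ i : Fin d → Bool, f i * ∏ m ∈ S, (bval (i m) - p m) / p m) *
              ∏ m ∈ S, (1 - u m ^ (p m / (1 - p m)))) := by
        have hps : (Finset.univ : Finset (Fin d)).powerset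
            = insert ∅ (Finset.univ.powerset.filter Finset.Nonempty) := by
          ext S
          simp [Finset.nonempty_iff_ne_empty]
          tauto
        conv_lhs => rw [hps]
        rw [Finset.sum_insert (by simp)]
        simp only [Finset.prod_empty, mul_one, hf1, hT]
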